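/- Let g(λ) = E[1(λ r^C < r^D)(r^D − λ r^C)] + λ E[r^C] − λ r_th. If λ* = min{λ ≥ 0 : E[r^C 1(λ r^C ≥ r^D)] ≥ r_th}, then for all 0 < Δλ ≤ λ*: g(λ*) ≤ g(λ* − Δλ), i.e., g is nonincreasing to the left of λ*. -/
import Mathlib


open MeasureTheory Set

/-- The Lagrange dual function `g(λ) = E[1(λ r^C < r^D)(r^D − λ r^C)] + λ E[r^C] − λ r_th`. -/
noncomputable def dualFn {S : Type*} [MeasurableSpace S] (μ : Measure S)
    (rC rD : S → ℝ) (rth : ℝ) (l : ℝ) : ℝ :=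
  (∫ s, ({s | l * rC s < rD s}.indicator (fun s => rD s - l * rC s)) s ∂μ) +
    l * (∫ s, rC s ∂μ) - l * rth

lemma indInt {S : Type*} [MeasurableSpace S] (μ : Measure S)
    (rC rD : S → ℝ) (hC : ∀ s, 0 ≤ rC s)
    (hCi : Integrable rC μ) (hDi : Integrable rD μ) (t : ℝ) :
    Integrable (fun s => ({s | rD s ≤ t * rC s}.indicator rC) s) μ := by
  have hCm := hCi.1.stronglyMeasurable_mk
  have hDm := hDi.1.stronglyMeasurable_mk
  have haesm : AEStronglyMeasurable
      (fun s => ({s | rD s ≤ t * rC s}.indicator rC) s) μ := by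
    refine ⟨fun s => ({s | hDi.1.mk rD s ≤ t * hCi.1.mk rC s}).indicator (hCi.1.mk rC) s,
      hCm.indicator (measurableSet_le hDm.measurable (hCm.measurable.const_mul t)), ?_⟩
    filter_upwards [hCi.1.ae_eq_mk, hDi.1.ae_eq_mk] with s h1 h2
    simp only [Set.indicator_apply, Set.mem_setOf_eq, ← h1, ← h2]
  refine hCi.mono haesm (ae_of_all _ fun s => ?_)
  by_cases h : s ∈ {s | rD s ≤ t * rC s}
  · rw [Set.indicator_of_mem h]
  · rw [Set.indicator_of_notMem h]
    simp [abs_nonneg]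

lemma dualFn_max {S : Type*} [MeasurableSpace S] (μ : Measure S)
    (rC rD : S → ℝ) (t : ℝ) :
    (∫ s, ({s | t * rC s < rD s}.indicator (fun s => rD s - t * rC s)) s ∂μ)
      = ∫ s, max (rD s - t * rC s) 0 ∂μ := by
  congr 1; funext s
  by_cases h : s ∈ {s | t * rC s < rD s}
  · rw [Set.indicator_of_mem h, max_eq_left]
    have : t * rC s < rD s := h
    linarith
  · rw [Set.indicator_of_notMem h, max_eq_right]
    have : ¬ (t * rC s < rD s) := h
    push_neg at this
    linarith

/-- key two-point inequality: `g(b) ≤ g(a) + (b-a)(h(b) - rth)` for `a ≤ b`. -/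
lemma dualFn_step {S : Type*} [MeasurableSpace S] (μ : Measure S) [IsProbabilityMeasure μ]
    (rC rD : S → ℝ) (hC : ∀ s, 0 ≤ rC s)
    (hCi : Integrable rC μ) (hDi : Integrable rD μ) (rth : ℝ)
    (a b : ℝ) (hab : a ≤ b) :
    dualFn μ rC rD rth b ≤ dualFn μ rC rD rth a
      + (b - a) * ((∫ s, ({s | rD s ≤ b * rC s}.indicator rC) s ∂μ) - rth) := by
  have hindInt := indInt μ rC rD hC hCi hDi b
  have intB : Integrable (fun s => max (rD s - b * rC s) 0) μ :=
    (hDi.sub (hCi.const_mul b)).pos_part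
  have intA : Integrable (fun s => max (rD s - a * rC s) 0) μ :=
    (hDi.sub (hCi.const_mul a)).pos_part
  have intRHS : Integrable (fun s => max (rD s - a * rC s) 0
      + (b - a) * (({s | rD s ≤ b * rC s}.indicator rC) s - rC s)) μ :=
    intA.add ((hindInt.sub hCi).const_mul (b - a))
  have hpt : ∀ s, max (rD s - b * rC s) 0 ≤ max (rD s - a * rC s) 0
      + (b - a) * (({s | rD s ≤ b * rC s}.indicator rC) s - rC s) := by
    intro s
    by_cases h : s ∈ {s | rD s ≤ b * rC s}
    · rw [Set.indicator_of_mem h]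
      have h' : rD s ≤ b * rC s := h
      rw [max_eq_right (by linarith)]
      have : 0 ≤ max (rD s - a * rC s) 0 := le_max_right _ _
      linarith
    · rw [Set.indicator_of_notMem h]
      have h' : ¬ (rD s ≤ b * rC s) := h
      push_neg at h'
      have hax : a * rC s ≤ b * rC s := mul_le_mul_of_nonneg_right hab (hC s)
      rw [max_eq_left (by linarith), max_eq_left (by linarith)]
      ring_nf
      linarith
  have hint : (∫ s, max (rD s - b * rC s) 0 ∂μ)
      ≤ ∫ s, (max (rD s - a * rC s) 0
        + (b - a) * (({s | rD s ≤ b * rC s}.indicator rC) s - rC s)) ∂μ :=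
    integral_mono intB intRHS hpt
  have intSub : Integrable (fun s => ({s | rD s ≤ b * rC s}.indicator rC) s - rC s) μ :=
    hindInt.sub hCi
  rw [integral_add intA (intSub.const_mul (b - a))] at hint
  rw [integral_const_mul, integral_sub hindInt hCi] at hint
  simp only [dualFn, dualFn_max]
  nlinarith [hint]

/-- `g` is nonincreasing to the left of `λ*`. -/
theorem stmt12 {S : Type*} [MeasurableSpace S] (μ : Measure S) [IsProbabilityMeasure μ]
    (rC rD : S → ℝ) (hC : ∀ s, 0 ≤ rC s) (hD : ∀ s, 0 ≤ rD s)
    (hCi : Integrable rC μ) (hDi : Integrable rD μ)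
    (rth : ℝ) (hrth : 0 < rth) (lstar : ℝ) (hl0 : 0 ≤ lstar)
    (hmem : rth ≤ ∫ s, ({s | rD s ≤ lstar * rC s}.indicator rC) s ∂μ)
    (hmin : ∀ l : ℝ, 0 ≤ l →
      rth ≤ ∫ s, ({s | rD s ≤ l * rC s}.indicator rC) s ∂μ → lstar ≤ l) :
    ∀ Δ : ℝ, 0 < Δ → Δ ≤ lstar → dualFn μ rC rD rth lstar ≤ dualFn μ rC rD rth (lstar - Δ) := by
  intro Δ hΔ hΔl
  set K : ℝ := (∫ s, ({s | rD s ≤ lstar * rC s}.indicator rC) s ∂μ) - rth with hK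
  have hK0 : 0 ≤ K := by linarith
  refine le_of_forall_pos_le_add fun ε hε => ?_
  -- choose small δ
  set δ : ℝ := min (Δ / 2) (ε / (K + 1)) with hδdef
  have hδ0 : 0 < δ := lt_min (by linarith) (div_pos hε (by linarith))
  have hδΔ : δ < Δ := lt_of_le_of_lt (min_le_left _ _) (by linarith)
  set b : ℝ := lstar - δ with hb
  have hb0 : 0 ≤ b := by simp only [hb]; linarith
  have hblt : b < lstar := by simp only [hb]; linarith
  -- h(b) < rth by minimality
  have hIb : (∫ s, ({s | rD s ≤ b * rC s}.indicator rC) s ∂μ) < rth := by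
    by_contra hcon
    push_neg at hcon
    exact absurd (hmin b hb0 hcon) (not_le.mpr hblt)
  -- g(b) ≤ g(lstar - Δ)
  have h1 : dualFn μ rC rD rth b ≤ dualFn μ rC rD rth (lstar - Δ) := by
    have := dualFn_step μ rC rD hC hCi hDi rth (lstar - Δ) b (by simp only [hb]; linarith)
    nlinarith [this]
  -- g(lstar) ≤ g(b) + δ * K
  have h2 : dualFn μ rC rD rth lstar ≤ dualFn μ rC rD rth b + δ * K := by
    have := dualFn_step μ rC rD hC hCi hDi rth b lstar (le_of_lt hblt)
    have hbd : lstar - b = δ := by simp only [hb]; ring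
    rw [hbd] at this
    exact this
  have hδK : δ * K ≤ ε := by
    have h3 : δ ≤ ε / (K + 1) := min_le_right _ _
    have hK1 : (0:ℝ) < K + 1 := by linarith
    have h6 : ε / (K + 1) * (K + 1) = ε := div_mul_cancel₀ ε (ne_of_gt hK1)
    have h7 : δ * K ≤ ε / (K + 1) * (K + 1) :=
      mul_le_mul h3 (by linarith) hK0 (le_of_lt (div_pos hε hK1))
    rw [h6] at h7
    exact h7
  linarith
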